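/- Let K be a number field of degree m over ℚ, let N_K(t) = #{nonzero ideals 𝔞 of O_K : N𝔞 ≤ t}, and let ρ be the residue of ζ_K at s = 1. Then for every integer n ≥ 1, the limit lim_{x→∞} (∑_{N𝔞 ≤ x} (log N𝔞)^n / N𝔞 − ρ · (log x)^{n+1}/(n+1)) exists, assuming N_K(t) = ρ t + O(t^{1−1/m}). -/

import Mathlib

open Filter NumberField MeasureTheory

section aux

noncomputable def auxf (n : ℕ) (t : ℝ) : ℝ := Real.log t ^ n * t⁻¹

noncomputable def auxg (n : ℕ) (t : ℝ) : ℝ :=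
  ((n : ℝ) * Real.log t ^ (n - 1) - Real.log t ^ n) * (t ^ 2)⁻¹

noncomputable def auxN (c : ℕ → ℝ) (t : ℝ) : ℝ := ∑ k ∈ Finset.Icc 0 ⌊t⌋₊, c k

noncomputable def auxE (c : ℕ → ℝ) (ρ : ℝ) (t : ℝ) : ℝ := auxN c t - ρ * t

lemma auxf_hasDerivAt (n : ℕ) {t : ℝ} (ht : t ≠ 0) : HasDerivAt (auxf n) (auxg n t) t := by
  have h1 : HasDerivAt (fun t : ℝ => Real.log t ^ n)
      ((n : ℝ) * Real.log t ^ (n - 1) * t⁻¹) t := (Real.hasDerivAt_log ht).pow n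
  have h2 : HasDerivAt (fun t : ℝ => t⁻¹) (-(t ^ 2)⁻¹) t := hasDerivAt_inv ht
  have := h1.mul h2
  refine this.congr_deriv ?_
  unfold auxg
  field_simp
  ring

lemma auxg_continuousAt (n : ℕ) {t : ℝ} (ht : t ≠ 0) : ContinuousAt (auxg n) t := by
  have hl : ContinuousAt Real.log t := Real.continuousAt_log ht
  exact (((hl.pow _).const_mul _).sub (hl.pow _)).mul
    (((continuousAt_id.pow 2)).inv₀ (pow_ne_zero 2 ht))

lemma auxg_measurable (n : ℕ) : Measurable (auxg n) := by
  unfold auxg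
  measurability

lemma auxN_measurable (c : ℕ → ℝ) : Measurable (auxN c) := by
  have h : Measurable fun m : ℕ => ∑ k ∈ Finset.Icc 0 m, c k := measurable_from_top
  exact h.comp Nat.measurable_floor

lemma auxE_measurable (c : ℕ → ℝ) (ρ : ℝ) : Measurable (auxE c ρ) :=
  (auxN_measurable c).sub (measurable_const.mul measurable_id)

lemma aux_abel (c : ℕ → ℝ) (hc0 : c 0 = 0) (n : ℕ) (b : ℝ) (hb : 1 ≤ b) :
    ∑ k ∈ Finset.Icc 0 ⌊b⌋₊, auxf n k * c k =
      auxf n b * auxN c b - ∫ t in Set.Ioc 1 b, auxg n t * auxN c t := by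
  have hne : ∀ t : ℝ, 1 ≤ t → t ≠ 0 := fun t ht => by positivity
  have hdiff : ∀ t ∈ Set.Icc (1 : ℝ) b, DifferentiableAt ℝ (auxf n) t := fun t ht =>
    (auxf_hasDerivAt n (hne t ht.1)).differentiableAt
  have hgcon : ContinuousOn (auxg n) (Set.Icc 1 b) := fun t ht =>
    (auxg_continuousAt n (hne t ht.1)).continuousWithinAt
  have hint : IntegrableOn (deriv (auxf n)) (Set.Icc 1 b) :=
    (hgcon.integrableOn_Icc).congr_fun
      (fun t ht => ((auxf_hasDerivAt n (hne t ht.1)).deriv).symm) measurableSet_Icc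
  have := sum_mul_eq_sub_integral_mul₀ c hc0 b hdiff hint
  rw [this]
  congr 1
  refine setIntegral_congr_fun measurableSet_Ioc fun t ht => ?_
  rw [(auxf_hasDerivAt n (hne t ht.1.le)).deriv]
  rfl

lemma aux_main_integral (n : ℕ) (hn : 1 ≤ n) (b : ℝ) (hb : 1 ≤ b) :
    ∫ t in Set.Ioc 1 b, auxg n t * t =
      Real.log b ^ n - Real.log b ^ (n + 1) / ((n : ℝ) + 1) := by
  have h1 : ∀ t ∈ Set.uIcc (1 : ℝ) b,
      HasDerivAt (fun t => Real.log t ^ n - Real.log t ^ (n + 1) / ((n : ℝ) + 1))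
        (auxg n t * t) t := by
    intro t ht
    rw [Set.uIcc_of_le hb] at ht
    have ht0 : t ≠ 0 := by have := ht.1; positivity
    have hd1 : HasDerivAt (fun t : ℝ => Real.log t ^ n)
        ((n : ℝ) * Real.log t ^ (n - 1) * t⁻¹) t := (Real.hasDerivAt_log ht0).pow n
    have hd2 := ((Real.hasDerivAt_log ht0).pow (n + 1)).div_const ((n : ℝ) + 1)
    have := hd1.sub hd2
    refine this.congr_deriv ?_
    have hnn : n + 1 - 1 = n := by omega
    rw [hnn]
    unfold auxg
    have hn1 : ((n : ℝ) + 1) ≠ 0 := by positivity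
    push_cast
    field_simp
  have h2 : IntervalIntegrable (fun t => auxg n t * t) volume 1 b := by
    apply ContinuousOn.intervalIntegrable
    intro t ht
    rw [Set.uIcc_of_le hb] at ht
    have ht0 : t ≠ 0 := by have := ht.1; positivity
    exact ((auxg_continuousAt n ht0).mul continuousAt_id).continuousWithinAt
  have h3 := intervalIntegral.integral_eq_sub_of_hasDerivAt h1 h2
  rw [intervalIntegral.integral_of_le hb] at h3
  rw [h3]
  simp [Real.log_one, zero_pow (by omega : n ≠ 0)]

lemma aux_g_abs (n : ℕ) (t : ℝ) (ht : 1 ≤ t) :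
    |auxg n t| ≤ ((n : ℝ) + 1) * (1 + Real.log t) ^ n * (t ^ 2)⁻¹ := by
  have hl0 : 0 ≤ Real.log t := Real.log_nonneg ht
  have h1 : Real.log t ^ (n - 1) ≤ (1 + Real.log t) ^ n :=
    calc Real.log t ^ (n - 1) ≤ (1 + Real.log t) ^ (n - 1) :=
          pow_le_pow_left₀ hl0 (by linarith) _
      _ ≤ (1 + Real.log t) ^ n := pow_le_pow_right₀ (by linarith) (Nat.sub_le n 1)
  have h2 : Real.log t ^ n ≤ (1 + Real.log t) ^ n := pow_le_pow_left₀ hl0 (by linarith) _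
  unfold auxg
  rw [abs_mul, abs_of_nonneg (by positivity : (0:ℝ) ≤ (t ^ 2)⁻¹)]
  refine mul_le_mul_of_nonneg_right ?_ (by positivity)
  rw [abs_sub_le_iff]
  have hp1 : (0:ℝ) ≤ Real.log t ^ (n - 1) := by positivity
  have hp2 : (0:ℝ) ≤ Real.log t ^ n := by positivity
  have hp3 : (0:ℝ) ≤ (1 + Real.log t) ^ n := by positivity
  have h4 : (n : ℝ) * Real.log t ^ (n - 1) ≤ (n : ℝ) * (1 + Real.log t) ^ n :=
    mul_le_mul_of_nonneg_left h1 (Nat.cast_nonneg n)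
  constructor <;> nlinarith

lemma aux_log_bound (ε : ℝ) (hε : 0 < ε) (n : ℕ) (hn : 1 ≤ n) :
    ∃ A : ℝ, 0 < A ∧ ∀ t : ℝ, 1 ≤ t → (1 + Real.log t) ^ n ≤ A * t ^ (ε / 2) := by
  have hn0 : (0:ℝ) < n := by exact_mod_cast hn
  set δ : ℝ := ε / (2 * n) with hδ
  have hδ0 : 0 < δ := by positivity
  refine ⟨(1 + 1 / δ) ^ n, by positivity, fun t ht => ?_⟩
  have ht0 : (0:ℝ) < t := by positivity
  have h1 : Real.log t ≤ t ^ δ / δ := Real.log_le_rpow_div ht0.le hδ0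
  have h2 : (1:ℝ) ≤ t ^ δ := Real.one_le_rpow ht hδ0.le
  have h3 : 1 + Real.log t ≤ (1 + 1 / δ) * t ^ δ := by
    have hd : 0 < 1 / δ := by positivity
    have : t ^ δ / δ = (1 / δ) * t ^ δ := by ring
    nlinarith
  calc (1 + Real.log t) ^ n ≤ ((1 + 1 / δ) * t ^ δ) ^ n := by
        refine pow_le_pow_left₀ ?_ h3 n
        have := Real.log_nonneg ht
        linarith
    _ = (1 + 1 / δ) ^ n * (t ^ δ) ^ n := mul_pow _ _ _
    _ = (1 + 1 / δ) ^ n * t ^ (ε / 2) := by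
        have hne : (n:ℝ) ≠ 0 := hn0.ne'
        have hexp : δ * (n:ℝ) = ε / 2 := by rw [hδ]; field_simp
        rw [← Real.rpow_natCast (t ^ δ) n, ← Real.rpow_mul ht0.le, hexp]

lemma aux_int_glob (c : ℕ → ℝ) (ρ C ε : ℝ) (hε : 0 < ε)
    (hbound : ∀ t : ℝ, 1 ≤ t → |auxE c ρ t| ≤ C * t ^ ((1:ℝ) - ε))
    (n : ℕ) (hn : 1 ≤ n) :
    IntegrableOn (fun t => auxg n t * auxE c ρ t) (Set.Ioi 1) := by
  obtain ⟨A, hA0, hA⟩ := aux_log_bound ε hε n hn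
  have hC0 : 0 ≤ C := by
    have := hbound 1 le_rfl
    have h1 : (1:ℝ) ^ ((1:ℝ) - ε) = 1 := Real.one_rpow _
    nlinarith [abs_nonneg (auxE c ρ 1)]
  set D : ℝ := C * (((n : ℝ) + 1) * A) with hD
  have key : ∀ t ∈ Set.Ioi (1:ℝ), ‖auxg n t * auxE c ρ t‖ ≤ D * t ^ (-1 - ε / 2) := by
    intro t ht
    have ht1 : (1:ℝ) ≤ t := le_of_lt ht
    have ht0 : (0:ℝ) < t := by positivity
    have hrpow : t ^ (ε / 2) * (t ^ 2)⁻¹ * t ^ ((1:ℝ) - ε) = t ^ (-1 - ε / 2) := by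
      rw [← Real.rpow_natCast t 2, ← Real.rpow_neg ht0.le, ← Real.rpow_add ht0,
        ← Real.rpow_add ht0]
      norm_num
      ring_nf
    rw [Real.norm_eq_abs, abs_mul]
    calc |auxg n t| * |auxE c ρ t|
        ≤ (((n : ℝ) + 1) * (1 + Real.log t) ^ n * (t ^ 2)⁻¹) * (C * t ^ ((1:ℝ) - ε)) := by
          refine mul_le_mul (aux_g_abs n t ht1) (hbound t ht1) (abs_nonneg _) ?_
          have hl0 : 0 ≤ Real.log t := Real.log_nonneg ht1
          positivity
      _ ≤ (((n : ℝ) + 1) * (A * t ^ (ε / 2)) * (t ^ 2)⁻¹) * (C * t ^ ((1:ℝ) - ε)) := by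
          have h := hA t ht1
          have h1 : (0:ℝ) ≤ ((n : ℝ) + 1) := by positivity
          have h2 : (0:ℝ) ≤ (t ^ 2)⁻¹ := by positivity
          have h3 : (0:ℝ) ≤ C * t ^ ((1:ℝ) - ε) := by positivity
          gcongr
      _ = D * (t ^ (ε / 2) * (t ^ 2)⁻¹ * t ^ ((1:ℝ) - ε)) := by rw [hD]; ring
      _ = D * t ^ (-1 - ε / 2) := by rw [hrpow]
  have hi : IntegrableOn (fun t : ℝ => D * t ^ (-1 - ε / 2)) (Set.Ioi 1) :=
    (integrableOn_Ioi_rpow_of_lt (by linarith) one_pos).const_mul _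
  refine Integrable.mono' hi
    (((auxg_measurable n).mul (auxE_measurable c ρ)).aestronglyMeasurable) ?_
  exact (ae_restrict_iff' measurableSet_Ioi).mpr (Eventually.of_forall key)

lemma aux_key (c : ℕ → ℝ) (hc0 : c 0 = 0) (ρ : ℝ) (n : ℕ) (hn : 1 ≤ n) (b : ℝ) (hb : 1 ≤ b)
    (hi2 : IntegrableOn (fun t => auxg n t * auxE c ρ t) (Set.Ioc 1 b)) :
    (∑ k ∈ Finset.Icc 1 ⌊b⌋₊, c k * Real.log k ^ n / k)
        - ρ * Real.log b ^ (n + 1) / ((n : ℝ) + 1)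
      = auxf n b * auxE c ρ b - ∫ t in Set.Ioc 1 b, auxg n t * auxE c ρ t := by
  have hb0 : (0:ℝ) < b := by positivity
  have hsum : ∑ k ∈ Finset.Icc 0 ⌊b⌋₊, auxf n k * c k
      = ∑ k ∈ Finset.Icc 1 ⌊b⌋₊, c k * Real.log k ^ n / k := by
    rw [Finset.Icc_eq_cons_Ioc (Nat.zero_le _), Finset.sum_cons, ← Finset.Icc_add_one_left_eq_Ioc]
    simp only [Nat.cast_zero, hc0, mul_zero, zero_add]
    refine Finset.sum_congr rfl fun k hk => ?_
    unfold auxf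
    rw [div_eq_mul_inv]; ring
  have hi1 : IntegrableOn (fun t => ρ * (auxg n t * t)) (Set.Ioc 1 b) := by
    have hcont : ContinuousOn (fun t : ℝ => ρ * (auxg n t * t)) (Set.Icc 1 b) := by
      intro t ht
      have ht0 : t ≠ 0 := by have := ht.1; positivity
      exact (continuousAt_const.mul
        ((auxg_continuousAt n ht0).mul continuousAt_id)).continuousWithinAt
    exact (hcont.integrableOn_Icc).mono_set Set.Ioc_subset_Icc_self
  have hsplit : ∫ t in Set.Ioc 1 b, auxg n t * auxN c t
      = ρ * (∫ t in Set.Ioc 1 b, auxg n t * t)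
        + ∫ t in Set.Ioc 1 b, auxg n t * auxE c ρ t := by
    have h1 : ∀ t : ℝ, auxg n t * auxN c t = ρ * (auxg n t * t) + auxg n t * auxE c ρ t := by
      intro t; unfold auxE; ring
    simp_rw [h1]
    rw [integral_add hi1 hi2, integral_const_mul]
  rw [← hsum, aux_abel c hc0 n b hb, hsplit, aux_main_integral n hn b hb]
  have hEb : auxN c b = ρ * b + auxE c ρ b := by unfold auxE; ring
  rw [hEb]
  unfold auxf
  have hbne : b ≠ 0 := hb0.ne'
  have hn1 : ((n:ℝ) + 1) ≠ 0 := by positivity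
  field_simp
  ring

lemma aux_tendsto_zero (c : ℕ → ℝ) (ρ C ε : ℝ) (hε : 0 < ε)
    (hbound : ∀ t : ℝ, 1 ≤ t → |auxE c ρ t| ≤ C * t ^ ((1:ℝ) - ε)) (n : ℕ) :
    Tendsto (fun b => auxf n b * auxE c ρ b) atTop (nhds 0) := by
  have h0 : Tendsto (fun b : ℝ => Real.log b ^ (n:ℝ) / b ^ ε) atTop (nhds 0) :=
    (isLittleO_log_rpow_rpow_atTop (n:ℝ) hε).tendsto_div_nhds_zero
  have h0' := h0.const_mul C
  rw [mul_zero] at h0'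
  rw [tendsto_zero_iff_abs_tendsto_zero]
  refine squeeze_zero' (Eventually.of_forall fun b => abs_nonneg _) ?_ h0'
  filter_upwards [eventually_ge_atTop (1:ℝ)] with b hb
  simp only [Function.comp_apply]
  have hb0 : (0:ℝ) < b := by positivity
  have hl0 : 0 ≤ Real.log b := Real.log_nonneg hb
  have hinv : b⁻¹ * b ^ ((1:ℝ) - ε) = (b ^ ε)⁻¹ := by
    rw [← Real.rpow_neg_one b, ← Real.rpow_add hb0, show (-1) + ((1:ℝ) - ε) = -ε by ring,
      Real.rpow_neg hb0.le]
  rw [abs_mul]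
  calc |auxf n b| * |auxE c ρ b| ≤ (Real.log b ^ n * b⁻¹) * (C * b ^ ((1:ℝ) - ε)) := by
        refine mul_le_mul ?_ (hbound b hb) (abs_nonneg _) (by positivity)
        unfold auxf
        rw [abs_of_nonneg (by positivity)]
    _ = C * (Real.log b ^ (n:ℝ) / b ^ ε) := by
        rw [Real.rpow_natCast, div_eq_mul_inv, ← hinv]; ring

lemma aux_analysis (c : ℕ → ℝ) (hc0 : c 0 = 0) (ρ C ε : ℝ) (hε : 0 < ε)
    (hbound : ∀ t : ℝ, 1 ≤ t →
      |(∑ k ∈ Finset.Icc 0 ⌊t⌋₊, c k) - ρ * t| ≤ C * t ^ ((1 : ℝ) - ε))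
    (n : ℕ) (hn : 1 ≤ n) :
    ∃ L : ℝ, Tendsto
      (fun x : ℝ =>
        (∑ k ∈ Finset.Icc 1 ⌊x⌋₊, c k * (Real.log k) ^ n / k)
        - ρ * (Real.log x) ^ (n + 1) / (n + 1)) atTop (nhds L) := by
  have hboundE : ∀ t : ℝ, 1 ≤ t → |auxE c ρ t| ≤ C * t ^ ((1:ℝ) - ε) := by
    intro t ht
    exact hbound t ht
  have hint := aux_int_glob c ρ C ε hε hboundE n hn
  have hlim1 := aux_tendsto_zero c ρ C ε hε hboundE n
  have hlim2 : Tendsto (fun b => ∫ t in Set.Ioc 1 b, auxg n t * auxE c ρ t) atTop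
      (nhds (∫ t in Set.Ioi 1, auxg n t * auxE c ρ t)) := by
    have h := intervalIntegral_tendsto_integral_Ioi 1 hint tendsto_id
    refine Tendsto.congr' ?_ h
    filter_upwards [eventually_ge_atTop (1:ℝ)] with b hb
    simp only [id_eq]
    rw [intervalIntegral.integral_of_le hb]
  refine ⟨0 - ∫ t in Set.Ioi 1, auxg n t * auxE c ρ t, ?_⟩
  refine Tendsto.congr' ?_ (hlim1.sub hlim2)
  filter_upwards [eventually_ge_atTop (1:ℝ)] with b hb
  exact (aux_key c hc0 ρ n hn b hb (hint.mono_set Set.Ioc_subset_Ioi_self)).symm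


/-- Counting lemma: the number of nonzero ideals of norm at most `t` equals the sum over
`k ∈ [1, ⌊t⌋]` of the number of ideals of norm `k`. -/
lemma aux_count (K : Type*) [Field K] [NumberField K] (t : ℝ) (ht : 0 ≤ t) :
    (Nat.card {I : Ideal (𝓞 K) // I ≠ ⊥ ∧ (Ideal.absNorm I : ℝ) ≤ t} : ℝ) =
      ∑ k ∈ Finset.Icc 1 ⌊t⌋₊, (Nat.card {I : Ideal (𝓞 K) // Ideal.absNorm I = k} : ℝ) := by
  classical
  have hiff : ∀ I : Ideal (𝓞 K),
      (I ≠ ⊥ ∧ (Ideal.absNorm I : ℝ) ≤ t) ↔ Ideal.absNorm I ∈ Finset.Icc 1 ⌊t⌋₊ := by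
    intro I
    simp only [Finset.mem_Icc, Nat.le_floor_iff ht, Nat.one_le_iff_ne_zero, ne_eq,
      Ideal.absNorm_eq_zero_iff]
  haveI : ∀ k : ℕ, Fintype {I : Ideal (𝓞 K) // Ideal.absNorm I = k} := fun k =>
    (Ideal.finite_setOf_absNorm_eq k).fintype
  have e1 : {I : Ideal (𝓞 K) // I ≠ ⊥ ∧ (Ideal.absNorm I : ℝ) ≤ t} ≃
      {I : Ideal (𝓞 K) // Ideal.absNorm I ∈ Finset.Icc 1 ⌊t⌋₊} :=
    Equiv.subtypeEquivRight hiff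
  have e2 : (Σ k : {k : ℕ // k ∈ Finset.Icc 1 ⌊t⌋₊},
      {I : Ideal (𝓞 K) // Ideal.absNorm I = (k : ℕ)}) ≃
      {I : Ideal (𝓞 K) // Ideal.absNorm I ∈ Finset.Icc 1 ⌊t⌋₊} :=
    Equiv.sigmaSubtypeFiberEquivSubtype _ (fun _ => Iff.rfl)
  rw [Nat.card_congr (e1.trans e2.symm), Nat.card_eq_fintype_card, Fintype.card_sigma]
  push_cast
  rw [← Finset.sum_coe_sort (Finset.Icc 1 ⌊t⌋₊)
    (fun k => (Nat.card {I : Ideal (𝓞 K) // Ideal.absNorm I = k} : ℝ))]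
  exact Finset.sum_congr rfl fun k _ => by rw [Nat.card_eq_fintype_card]

end aux

/-- For a number field `K` of degree `m` with ideal counting function
`N_K(t) = ρt + O(t^{1−1/m})`, for every `n ≥ 1` the limit
`lim_{x→∞} (∑_{N𝔞 ≤ x} (log N𝔞)^n / N𝔞 − ρ (log x)^{n+1}/(n+1))` exists. -/
theorem dedekind_stieltjes_limit_exists (K : Type*) [Field K] [NumberField K]
    (ρ : ℝ)
    (NK : ℝ → ℝ)
    (hNK : ∀ t : ℝ, NK t =
      (Nat.card {I : Ideal (𝓞 K) // I ≠ ⊥ ∧ (Ideal.absNorm I : ℝ) ≤ t} : ℝ))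
    (hcount : ∃ C : ℝ, ∀ t : ℝ, 1 ≤ t →
      |NK t - ρ * t| ≤ C * t ^ ((1 : ℝ) - 1 / (Module.finrank ℚ K : ℝ)))
    (n : ℕ) (hn : 1 ≤ n) :
    ∃ L : ℝ, Tendsto
      (fun x : ℝ =>
        (∑ k ∈ Finset.Icc 1 ⌊x⌋₊,
          (Nat.card {I : Ideal (𝓞 K) // Ideal.absNorm I = k} : ℝ) * (Real.log k) ^ n / k)
        - ρ * (Real.log x) ^ (n + 1) / (n + 1)) atTop (nhds L) := by
  classical
  obtain ⟨C, hC⟩ := hcount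
  set c : ℕ → ℝ := fun k =>
    if k = 0 then 0 else (Nat.card {I : Ideal (𝓞 K) // Ideal.absNorm I = k} : ℝ) with hc
  have hm : (0 : ℝ) < 1 / (Module.finrank ℚ K : ℝ) := by
    have : 0 < Module.finrank ℚ K := Module.finrank_pos
    positivity
  have hsum : ∀ m : ℕ, ∑ k ∈ Finset.Icc 1 m, c k =
      ∑ k ∈ Finset.Icc 1 m, (Nat.card {I : Ideal (𝓞 K) // Ideal.absNorm I = k} : ℝ) := by
    intro m
    refine Finset.sum_congr rfl fun k hk => ?_
    have : k ≠ 0 := by have := (Finset.mem_Icc.mp hk).1; omega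
    simp [hc, this]
  have hsum0 : ∀ m : ℕ, ∑ k ∈ Finset.Icc 0 m, c k = ∑ k ∈ Finset.Icc 1 m, c k := by
    intro m
    rw [Finset.Icc_eq_cons_Ioc (Nat.zero_le m), Finset.sum_cons, ← Finset.Icc_add_one_left_eq_Ioc]
    simp [hc]
  have hbound : ∀ t : ℝ, 1 ≤ t →
      |(∑ k ∈ Finset.Icc 0 ⌊t⌋₊, c k) - ρ * t| ≤
        C * t ^ ((1 : ℝ) - 1 / (Module.finrank ℚ K : ℝ)) := by
    intro t ht
    have := hC t ht
    rwa [hNK t, aux_count K t (by linarith), ← hsum, ← hsum0] at this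
  obtain ⟨L, hL⟩ := aux_analysis c (by simp [hc]) ρ C _ hm hbound n hn
  refine ⟨L, hL.congr fun x => ?_⟩
  congr 1
  refine Finset.sum_congr rfl fun k hk => ?_
  have hk0 : k ≠ 0 := by have := (Finset.mem_Icc.mp hk).1; omega
  simp [hc, hk0]
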